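/- Let v₁,…,v_m ∈ ℂⁿ be nonzero vectors spanning ℂⁿ and f₁,…,f_m ∈ (ℂⁿ)^* nonzero linear functionals spanning (ℂⁿ)^*. Then there exists a subset B ⊆ {1,…,m} such that (v_k)_{k∈B} is a basis of ℂⁿ and (f_k)_{k∈B} is a basis of (ℂⁿ)^*, if and only if for every subspace U ≤ ℂⁿ one has dim U ≤ dim span{v_k : k ∈ {1,…,m}, U ⊄ ker f_k}, i.e., dim U ≤ dim (Σ_{k=1}^m (v_k f_k)(U)) where v_k f_k denotes the rank-one map u ↦ f_k(u)·v_k. -/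

import Mathlib

open Submodule Module

/-- Key auxiliary lemma: induction on `m`, over arbitrary spaces. -/
theorem lovasz_aux (m : ℕ) :
    ∀ (V W : Type) [AddCommGroup V] [Module ℂ V] [FiniteDimensional ℂ V]
      [AddCommGroup W] [Module ℂ W] [FiniteDimensional ℂ W]
      (v : Fin m → V) (f : Fin m → (W →ₗ[ℂ] ℂ)),
      Module.finrank ℂ V = Module.finrank ℂ W →
      (∀ U : Submodule ℂ W, Module.finrank ℂ U ≤
        Module.finrank ℂ (Submodule.span ℂ (v '' {k | ¬ U ≤ LinearMap.ker (f k)}))) →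
      ∃ B : Finset (Fin m), B.card = Module.finrank ℂ W ∧
        Submodule.span ℂ (v '' ↑B) = ⊤ ∧ Submodule.span ℂ (f '' ↑B) = ⊤ := by
  induction m with
  | zero =>
    intro V W _ _ _ _ _ _ v f hdim hC
    have h0 : Module.finrank ℂ W = 0 := by
      have := hC ⊤
      have hK : (v '' {k | ¬ (⊤ : Submodule ℂ W) ≤ LinearMap.ker (f k)}) = (∅ : Set V) := by
        simp [Set.eq_empty_iff_forall_notMem]
      rw [hK] at this
      simp only [Submodule.span_empty, finrank_top] at this
      simpa using Nat.le_zero.mp (this.trans_eq (by simp))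
    have hV0 : Module.finrank ℂ V = 0 := by rw [hdim, h0]
    have : Subsingleton V := finrank_zero_iff.mp hV0
    have : Subsingleton W := finrank_zero_iff.mp h0
    refine ⟨∅, by simp [h0], ?_, ?_⟩
    · apply Subsingleton.elim
    · have : Subsingleton (W →ₗ[ℂ] ℂ) := by
        constructor; intro a b; ext x; rw [Subsingleton.elim x 0]; simp
      apply Subsingleton.elim
  | succ m ih =>
    intro V W _ _ _ _ _ _ v f hdim hC
    classical
    -- Notation for the "K"-sets and their spans
    by_cases hdel : ∀ U : Submodule ℂ W, Module.finrank ℂ U ≤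
        Module.finrank ℂ (Submodule.span ℂ
          ((fun j : Fin m => v j.succ) '' {j | ¬ U ≤ LinearMap.ker (f j.succ)}))
    · -- delete index 0
      obtain ⟨B', hcard, hvs, hfs⟩ := ih V W (fun j => v j.succ) (fun j => f j.succ) hdim hdel
      refine ⟨B'.map ⟨Fin.succ, Fin.succ_injective m⟩, by simpa using hcard, ?_, ?_⟩
      · rw [Finset.coe_map]
        show Submodule.span ℂ (v '' (Fin.succ '' ↑B')) = ⊤
        rw [← Set.image_comp]
        exact hvs
      · rw [Finset.coe_map]
        show Submodule.span ℂ (f '' (Fin.succ '' ↑B')) = ⊤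
        rw [← Set.image_comp]
        exact hfs
    · push_neg at hdel
      obtain ⟨U₂, h2⟩ := hdel
      rw [show ((fun j : Fin m => v j.succ) '' {j | ¬ U₂ ≤ LinearMap.ker (f j.succ)})
            = v '' (Fin.succ '' {j | ¬ U₂ ≤ LinearMap.ker (f j.succ)}) from
          (Set.image_image v Fin.succ _).symm] at h2
      have hsucc_img : Fin.succ '' {j | ¬ U₂ ≤ LinearMap.ker (f j.succ)}
          = {k | ¬ U₂ ≤ LinearMap.ker (f k)} \ {0} := by
        ext k
        constructor
        · rintro ⟨j, hj, rfl⟩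
          exact ⟨hj, Fin.succ_ne_zero j⟩
        · rintro ⟨hk, hk0⟩
          obtain ⟨j, rfl⟩ := Fin.exists_succ_eq_of_ne_zero hk0
          exact ⟨j, hk, rfl⟩
      rw [hsucc_img] at h2
      -- 0 ∈ K U₂
      have h2a : ¬ U₂ ≤ LinearMap.ker (f 0) := by
        intro h0
        have : {k | ¬ U₂ ≤ LinearMap.ker (f k)} \ {0} = {k | ¬ U₂ ≤ LinearMap.ker (f k)} := by
          apply Set.diff_singleton_eq_self
          simpa using h0
        rw [this] at h2
        exact absurd (hC U₂) (not_le.mpr h2)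
      have hf0 : f 0 ≠ 0 := fun h => h2a (by simp [h])
      -- v 0 is not in the span of the other relevant vectors
      have h2b : v 0 ∉ Submodule.span ℂ (v '' ({k | ¬ U₂ ≤ LinearMap.ker (f k)} \ {0})) := by
        intro hin
        have hsub : v '' {k | ¬ U₂ ≤ LinearMap.ker (f k)} ⊆
            insert (v 0) (v '' ({k | ¬ U₂ ≤ LinearMap.ker (f k)} \ {0})) := by
          rintro _ ⟨k, hk, rfl⟩
          by_cases hk0 : k = 0
          · subst hk0; exact Set.mem_insert _ _
          · exact Set.mem_insert_of_mem _ ⟨k, ⟨hk, hk0⟩, rfl⟩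
        have hle : Submodule.span ℂ (v '' {k | ¬ U₂ ≤ LinearMap.ker (f k)}) ≤
            Submodule.span ℂ (v '' ({k | ¬ U₂ ≤ LinearMap.ker (f k)} \ {0})) := by
          refine (Submodule.span_mono hsub).trans ?_
          rw [Submodule.span_insert]
          refine sup_le ?_ le_rfl
          simpa [Submodule.span_le] using hin
        have := (hC U₂).trans (Submodule.finrank_mono hle)
        exact absurd this (not_le.mpr h2)
      have hv0 : v 0 ≠ 0 := fun h => h2b (by rw [h]; exact Submodule.zero_mem _)
      obtain ⟨w, hw⟩ : ∃ w, f 0 w ≠ 0 := by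
        by_contra h; push_neg at h; exact hf0 (by ext x; simp [h])
      have hW'def : True := trivial
      -- dimension bookkeeping
      have hQdim : Module.finrank ℂ (V ⧸ (ℂ ∙ v 0)) + 1 = Module.finrank ℂ V := by
        have h := Submodule.finrank_quotient_add_finrank (ℂ ∙ v 0)
        rwa [finrank_span_singleton hv0] at h
      have hW'dim : Module.finrank ℂ (LinearMap.ker (f 0)) + 1 = Module.finrank ℂ W := by
        have h1 := LinearMap.finrank_range_add_finrank_ker (f 0)
        have hrange : LinearMap.range (f 0) = ⊤ := by
          rw [LinearMap.range_eq_top]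
          intro c
          exact ⟨(c / f 0 w) • w, by simp [div_mul_cancel₀, hw]⟩
        rw [hrange, finrank_top, Module.finrank_self] at h1
        omega
      have hdim' : Module.finrank ℂ (V ⧸ (ℂ ∙ v 0)) =
          Module.finrank ℂ (LinearMap.ker (f 0)) := by omega
      set vc : Fin m → V ⧸ (ℂ ∙ v 0) := fun j => (ℂ ∙ v 0).mkQ (v j.succ) with hvc
      set fc : Fin m → ((LinearMap.ker (f 0)) →ₗ[ℂ] ℂ) :=
        fun j => (LinearMap.ker (f 0)).dualRestrict (f j.succ) with hfc
      by_cases hcon : ∀ U : Submodule ℂ (LinearMap.ker (f 0)), Module.finrank ℂ U ≤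
          Module.finrank ℂ (Submodule.span ℂ (vc '' {j | ¬ U ≤ LinearMap.ker (fc j)}))
      · -- contract index 0
        obtain ⟨B', hcard, hvs, hfs⟩ := ih _ (LinearMap.ker (f 0)) vc fc hdim' hcon
        refine ⟨insert 0 (B'.map ⟨Fin.succ, Fin.succ_injective m⟩), ?_, ?_, ?_⟩
        · rw [Finset.card_insert_of_notMem (by simp [Fin.succ_ne_zero]), Finset.card_map, hcard]
          omega
        · rw [Finset.coe_insert, Finset.coe_map, Set.image_insert_eq, Submodule.span_insert]
          have key : vc '' ↑B' = (ℂ ∙ v 0).mkQ '' (v '' (Fin.succ '' ↑B')) := by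
            simp only [hvc, Set.image_image]
          have hmap : Submodule.map (ℂ ∙ v 0).mkQ
              (Submodule.span ℂ (v '' (Fin.succ '' ↑B'))) = ⊤ := by
            rw [Submodule.map_span, ← key]
            exact hvs
          rw [Submodule.map_mkQ_eq_top] at hmap
          exact hmap
        · rw [Finset.coe_insert, Finset.coe_map, Set.image_insert_eq, Submodule.span_insert]
          have key : fc '' ↑B' =
              (LinearMap.ker (f 0)).dualRestrict '' (f '' (Fin.succ '' ↑B')) := by
            simp only [hfc, Set.image_image]
          have hmap : Submodule.map (LinearMap.ker (f 0)).dualRestrict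
              (Submodule.span ℂ (f '' (Fin.succ '' ↑B'))) = ⊤ := by
            rw [Submodule.map_span, ← key]
            exact hfs
          have hsup : Submodule.span ℂ (f '' (Fin.succ '' ↑B')) ⊔
              LinearMap.ker (LinearMap.ker (f 0)).dualRestrict = ⊤ := by
            have h := congrArg (Submodule.comap (LinearMap.ker (f 0)).dualRestrict) hmap
            rwa [Submodule.comap_map_eq, Submodule.comap_top] at h
          have hker : LinearMap.ker (LinearMap.ker (f 0)).dualRestrict ≤ (ℂ ∙ f 0) := by
            intro g hg
            rw [LinearMap.mem_ker] at hg
            have hgW' : ∀ x, x ∈ LinearMap.ker (f 0) → g x = 0 := by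
              intro x hx
              have : (LinearMap.ker (f 0)).dualRestrict g ⟨x, hx⟩ = 0 := by rw [hg]; rfl
              rwa [Submodule.dualRestrict_apply] at this
            rw [Submodule.mem_span_singleton]
            refine ⟨g w / f 0 w, ?_⟩
            ext x
            have hx : x - (f 0 x / f 0 w) • w ∈ LinearMap.ker (f 0) := by
              simp only [LinearMap.mem_ker, map_sub, map_smul, smul_eq_mul]
              field_simp
              ring
            have hzero := hgW' _ hx
            simp only [map_sub, map_smul, smul_eq_mul, sub_eq_zero] at hzero
            simp only [LinearMap.smul_apply, smul_eq_mul]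
            rw [hzero]
            field_simp
          rw [eq_top_iff, ← hsup]
          exact sup_le le_sup_right (hker.trans le_sup_left)
      · -- contraction also fails: derive a contradiction
        exfalso
        push_neg at hcon
        obtain ⟨U'', hU''⟩ := hcon
        set U₁ : Submodule ℂ W := Submodule.map (LinearMap.ker (f 0)).subtype U'' with hU₁def
        have hU1le : U₁ ≤ LinearMap.ker (f 0) := Submodule.map_subtype_le _ _
        have hU1rank : Module.finrank ℂ U'' = Module.finrank ℂ U₁ :=
          ((LinearMap.ker (f 0)).equivSubtypeMap U'').finrank_eq
        have hkerfc : ∀ j : Fin m, LinearMap.ker (fc j) =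
            Submodule.comap (LinearMap.ker (f 0)).subtype (LinearMap.ker (f j.succ)) := by
          intro j; ext x; simp [hfc]
        have hiff : ∀ j : Fin m,
            (U₁ ≤ LinearMap.ker (f j.succ)) ↔ (U'' ≤ LinearMap.ker (fc j)) := by
          intro j; rw [hkerfc j, hU₁def, Submodule.map_le_iff_le_comap]
        have hK1eq : {k : Fin (m+1) | ¬ U₁ ≤ LinearMap.ker (f k)} =
            Fin.succ '' {j | ¬ U'' ≤ LinearMap.ker (fc j)} := by
          ext k
          simp only [Set.mem_setOf_eq, Set.mem_image]
          constructor
          · intro hk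
            have hk0 : k ≠ 0 := by rintro rfl; exact hk hU1le
            obtain ⟨j, rfl⟩ := Fin.exists_succ_eq_of_ne_zero hk0
            exact ⟨j, fun hle => hk ((hiff j).mpr hle), rfl⟩
          · rintro ⟨j, hj, rfl⟩
            exact fun hle => hj ((hiff j).mp hle)
        have hspanc : Submodule.span ℂ (vc '' {j | ¬ U'' ≤ LinearMap.ker (fc j)}) =
            Submodule.map (ℂ ∙ v 0).mkQ
              (Submodule.span ℂ (v '' {k | ¬ U₁ ≤ LinearMap.ker (f k)})) := by
          rw [Submodule.map_span]
          congr 1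
          rw [hK1eq]
          simp only [hvc, Set.image_image]
        -- rank-nullity for the quotient restriction
        have hsplit : Module.finrank ℂ
              (Submodule.span ℂ (v '' {k | ¬ U₁ ≤ LinearMap.ker (f k)})) =
            Module.finrank ℂ (Submodule.map (ℂ ∙ v 0).mkQ
              (Submodule.span ℂ (v '' {k | ¬ U₁ ≤ LinearMap.ker (f k)}))) +
            Module.finrank ℂ
              ((Submodule.span ℂ (v '' {k | ¬ U₁ ≤ LinearMap.ker (f k)})) ⊓ (ℂ ∙ v 0) :
                Submodule ℂ V) := by
          set S₁ := Submodule.span ℂ (v '' {k | ¬ U₁ ≤ LinearMap.ker (f k)}) with hS₁def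
          have h := LinearMap.finrank_range_add_finrank_ker ((ℂ ∙ v 0).mkQ ∘ₗ S₁.subtype)
          rw [LinearMap.range_comp, Submodule.range_subtype, LinearMap.ker_comp,
            Submodule.ker_mkQ] at h
          have he : Module.finrank ℂ (Submodule.comap S₁.subtype (ℂ ∙ v 0)) =
              Module.finrank ℂ (S₁ ⊓ (ℂ ∙ v 0) : Submodule ℂ V) := by
            have e1 : Submodule.comap S₁.subtype (ℂ ∙ v 0) =
                Submodule.comap S₁.subtype (S₁ ⊓ (ℂ ∙ v 0)) := by
              ext x; simp [x.2]
            rw [e1]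
            exact (Submodule.comapSubtypeEquivOfLe
              (inf_le_left : S₁ ⊓ (ℂ ∙ v 0) ≤ S₁)).finrank_eq
          omega
        rw [hspanc, hU1rank] at hU''
        have hCU1 := hC U₁
        have hd1 : Module.finrank ℂ
            ((Submodule.span ℂ (v '' {k | ¬ U₁ ≤ LinearMap.ker (f k)})) ⊓ (ℂ ∙ v 0) :
              Submodule ℂ V) ≤ 1 := by
          have := Submodule.finrank_mono
            (inf_le_right : (Submodule.span ℂ (v '' {k | ¬ U₁ ≤ LinearMap.ker (f k)})) ⊓
              (ℂ ∙ v 0) ≤ (ℂ ∙ v 0))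
          rwa [finrank_span_singleton hv0] at this
        have hv0S1 : v 0 ∈ Submodule.span ℂ (v '' {k | ¬ U₁ ≤ LinearMap.ker (f k)}) := by
          have hdeq : Module.finrank ℂ
              ((Submodule.span ℂ (v '' {k | ¬ U₁ ≤ LinearMap.ker (f k)})) ⊓ (ℂ ∙ v 0) :
                Submodule ℂ V) = 1 := by omega
          have heq : (Submodule.span ℂ (v '' {k | ¬ U₁ ≤ LinearMap.ker (f k)})) ⊓ (ℂ ∙ v 0)
              = (ℂ ∙ v 0) :=
            Submodule.eq_of_le_of_finrank_le inf_le_right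
              (by rw [finrank_span_singleton hv0, hdeq])
          have hm : v 0 ∈ (Submodule.span ℂ (v '' {k | ¬ U₁ ≤ LinearMap.ker (f k)})) ⊓
              (ℂ ∙ v 0) := by
            rw [heq]; exact Submodule.mem_span_singleton_self (v 0)
          exact hm.1
        have htight1 : Module.finrank ℂ U₁ =
            Module.finrank ℂ (Submodule.span ℂ (v '' {k | ¬ U₁ ≤ LinearMap.ker (f k)})) := by
          omega
        -- the U₂ side
        have hv0S2 : v 0 ∈ Submodule.span ℂ (v '' {k | ¬ U₂ ≤ LinearMap.ker (f k)}) :=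
          Submodule.subset_span ⟨0, h2a, rfl⟩
        have hS2le : Submodule.span ℂ (v '' {k | ¬ U₂ ≤ LinearMap.ker (f k)}) ≤
            (ℂ ∙ v 0) ⊔ Submodule.span ℂ (v '' ({k | ¬ U₂ ≤ LinearMap.ker (f k)} \ {0})) := by
          rw [← Submodule.span_insert]
          apply Submodule.span_mono
          rintro _ ⟨k, hk, rfl⟩
          by_cases hk0 : k = 0
          · subst hk0; exact Set.mem_insert _ _
          · exact Set.mem_insert_of_mem _ ⟨k, ⟨hk, hk0⟩, rfl⟩
        have hs2 : Module.finrank ℂ (Submodule.span ℂ (v '' {k | ¬ U₂ ≤ LinearMap.ker (f k)})) ≤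
            Module.finrank ℂ
              (Submodule.span ℂ (v '' ({k | ¬ U₂ ≤ LinearMap.ker (f k)} \ {0}))) + 1 := by
          have hsum := Submodule.finrank_sup_add_finrank_inf_eq (ℂ ∙ v 0)
            (Submodule.span ℂ (v '' ({k | ¬ U₂ ≤ LinearMap.ker (f k)} \ {0})))
          have h1 : Module.finrank ℂ (ℂ ∙ v 0 : Submodule ℂ V) = 1 :=
            finrank_span_singleton hv0
          have hm := Submodule.finrank_mono hS2le
          omega
        have hCU2 := hC U₂
        -- combining the two certificates
        have hKP : {k | ¬ (U₁ ⊔ U₂) ≤ LinearMap.ker (f k)} =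
            {k | ¬ U₁ ≤ LinearMap.ker (f k)} ∪ {k | ¬ U₂ ≤ LinearMap.ker (f k)} := by
          ext k
          simp only [Set.mem_setOf_eq, Set.mem_union, sup_le_iff]
          tauto
        have hSP : Submodule.span ℂ (v '' {k | ¬ (U₁ ⊔ U₂) ≤ LinearMap.ker (f k)}) =
            Submodule.span ℂ (v '' {k | ¬ U₁ ≤ LinearMap.ker (f k)}) ⊔
            Submodule.span ℂ (v '' {k | ¬ U₂ ≤ LinearMap.ker (f k)}) := by
          rw [hKP, Set.image_union, Submodule.span_union]
        have hKIsub : {k | ¬ (U₁ ⊓ U₂) ≤ LinearMap.ker (f k)} ⊆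
            {k | ¬ U₂ ≤ LinearMap.ker (f k)} \ {0} := by
          intro k hk
          refine ⟨fun h => hk (le_trans inf_le_right h), ?_⟩
          rintro rfl
          exact hk (le_trans inf_le_left hU1le)
        have hKIsub1 : {k | ¬ (U₁ ⊓ U₂) ≤ LinearMap.ker (f k)} ⊆
            {k | ¬ U₁ ≤ LinearMap.ker (f k)} :=
          fun k hk h => hk (le_trans inf_le_left h)
        have hSIle : Submodule.span ℂ (v '' {k | ¬ (U₁ ⊓ U₂) ≤ LinearMap.ker (f k)}) ≤
            Submodule.span ℂ (v '' {k | ¬ U₁ ≤ LinearMap.ker (f k)}) ⊓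
            Submodule.span ℂ (v '' {k | ¬ U₂ ≤ LinearMap.ker (f k)}) :=
          le_inf (Submodule.span_mono (Set.image_mono (f := v) hKIsub1))
            (Submodule.span_mono (Set.image_mono (f := v) (hKIsub.trans Set.diff_subset)))
        have hmodU := Submodule.finrank_sup_add_finrank_inf_eq U₁ U₂
        have hmodS := Submodule.finrank_sup_add_finrank_inf_eq
          (Submodule.span ℂ (v '' {k | ¬ U₁ ≤ LinearMap.ker (f k)}))
          (Submodule.span ℂ (v '' {k | ¬ U₂ ≤ LinearMap.ker (f k)}))
        have hCP := hC (U₁ ⊔ U₂)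
        rw [hSP] at hCP
        have hCI := hC (U₁ ⊓ U₂)
        have hSIm := Submodule.finrank_mono hSIle
        have hSIeq : Submodule.span ℂ (v '' {k | ¬ (U₁ ⊓ U₂) ≤ LinearMap.ker (f k)}) =
            Submodule.span ℂ (v '' {k | ¬ U₁ ≤ LinearMap.ker (f k)}) ⊓
            Submodule.span ℂ (v '' {k | ¬ U₂ ≤ LinearMap.ker (f k)}) :=
          Submodule.eq_of_le_of_finrank_le hSIle (by omega)
        have hv0I : v 0 ∈ Submodule.span ℂ (v '' {k | ¬ (U₁ ⊓ U₂) ≤ LinearMap.ker (f k)}) := by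
          rw [hSIeq]
          exact Submodule.mem_inf.mpr ⟨hv0S1, hv0S2⟩
        exact h2b ((Submodule.span_mono (Set.image_mono (f := v) hKIsub)) hv0I)

/-- **Lovász's characterization of common bases of linear matroids.** Given nonzero
vectors `v₁,…,v_m` spanning `ℂⁿ` and nonzero functionals `f₁,…,f_m` spanning `(ℂⁿ)^*`,
there is a subset `B ⊆ [m]` such that `(v_k)_{k∈B}` is a basis of `ℂⁿ` and
`(f_k)_{k∈B}` is a basis of `(ℂⁿ)^*` iff for every subspace `U ≤ ℂⁿ` one has
`dim U ≤ dim span{v_k : U ⊄ ker f_k}` (i.e. `dim U ≤ dim Σ_k (v_k f_k)(U)`). -/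
theorem lovasz_common_base_iff
    (n m : ℕ)
    (v : Fin m → (Fin n → ℂ)) (f : Fin m → ((Fin n → ℂ) →ₗ[ℂ] ℂ))
    (hv0 : ∀ k, v k ≠ 0) (hf0 : ∀ k, f k ≠ 0)
    (hvspan : Submodule.span ℂ (Set.range v) = ⊤)
    (hfspan : Submodule.span ℂ (Set.range f) = ⊤) :
    (∃ B : Finset (Fin m),
        LinearIndependent ℂ (fun k : (B : Finset (Fin m)) => v k.1) ∧
        Submodule.span ℂ (v '' (B : Set (Fin m))) = ⊤ ∧
        LinearIndependent ℂ (fun k : (B : Finset (Fin m)) => f k.1) ∧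
        Submodule.span ℂ (f '' (B : Set (Fin m))) = ⊤) ↔
      (∀ U : Submodule ℂ (Fin n → ℂ),
        Module.finrank ℂ U ≤
          Module.finrank ℂ (Submodule.span ℂ
            {w : Fin n → ℂ | ∃ k : Fin m, ¬ U ≤ LinearMap.ker (f k) ∧ w = v k})) := by
  have hset : ∀ U : Submodule ℂ (Fin n → ℂ),
      {w : Fin n → ℂ | ∃ k : Fin m, ¬ U ≤ LinearMap.ker (f k) ∧ w = v k}
        = v '' {k | ¬ U ≤ LinearMap.ker (f k)} := by
    intro U
    ext x
    simp only [Set.mem_setOf_eq, Set.mem_image]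
    exact ⟨fun ⟨k, h, e⟩ => ⟨k, h, e.symm⟩, fun ⟨k, h, e⟩ => ⟨k, h, e.symm⟩⟩
  constructor
  · rintro ⟨B, hBiv, -, -, hBfspan⟩ U
    classical
    set SB := B.filter (fun k => ¬ U ≤ LinearMap.ker (f k)) with hSBdef
    have hinj : Function.Injective
        (LinearMap.pi (fun k : SB => (f k.1).comp U.subtype) : U →ₗ[ℂ] (SB → ℂ)) := by
      rw [← LinearMap.ker_eq_bot, Submodule.eq_bot_iff]
      intro u hu
      rw [LinearMap.mem_ker] at hu
      have hall : ∀ g : Module.Dual ℂ (Fin n → ℂ), g u.1 = 0 := by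
        have hle : Submodule.span ℂ (f '' ↑B) ≤
            LinearMap.ker (LinearMap.applyₗ (u.1 : Fin n → ℂ)) := by
          rw [Submodule.span_le]
          rintro _ ⟨k, hkB, rfl⟩
          rw [SetLike.mem_coe, LinearMap.mem_ker]
          by_cases hUk : U ≤ LinearMap.ker (f k)
          · exact hUk u.2
          · have hkSB : k ∈ SB := Finset.mem_filter.mpr ⟨hkB, hUk⟩
            exact congrFun hu ⟨k, hkSB⟩
        intro g
        have hg : g ∈ LinearMap.ker (LinearMap.applyₗ (u.1 : Fin n → ℂ)) := by
          apply hle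
          rw [hBfspan]; trivial
        exact hg
      have : u.1 = 0 := (Module.forall_dual_apply_eq_zero_iff ℂ u.1).mp hall
      exact Subtype.ext this
    have h1 : Module.finrank ℂ U ≤ Module.finrank ℂ (SB → ℂ) :=
      LinearMap.finrank_le_finrank_of_injective hinj
    have h2 : Module.finrank ℂ (SB → ℂ) = SB.card := by
      rw [Module.finrank_fintype_fun_eq_card, Fintype.card_coe]
    have hli : LinearIndependent ℂ (fun k : SB => v k.1) := by
      have hmap : ∀ k : SB, k.1 ∈ B := fun k => (Finset.mem_filter.mp k.2).1
      exact hBiv.comp (fun k : SB => (⟨k.1, hmap k⟩ : B))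
        (fun a b h => Subtype.ext (Subtype.mk_eq_mk.mp h))
    have hrange : Set.range (fun k : SB => v k.1) = v '' ↑SB := by
      ext x
      constructor
      · rintro ⟨k, rfl⟩; exact ⟨k.1, k.2, rfl⟩
      · rintro ⟨k, hk, rfl⟩; exact ⟨⟨k, hk⟩, rfl⟩
    have h3 : SB.card = Module.finrank ℂ (Submodule.span ℂ (v '' ↑SB)) := by
      rw [← hrange, finrank_span_eq_card hli, Fintype.card_coe]
    have h4 : Submodule.span ℂ (v '' ↑SB) ≤ Submodule.span ℂ
        {w : Fin n → ℂ | ∃ k : Fin m, ¬ U ≤ LinearMap.ker (f k) ∧ w = v k} := by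
      apply Submodule.span_mono
      rintro _ ⟨k, hk, rfl⟩
      exact ⟨k, (Finset.mem_filter.mp hk).2, rfl⟩
    calc Module.finrank ℂ U ≤ SB.card := h1.trans_eq h2
      _ = Module.finrank ℂ (Submodule.span ℂ (v '' ↑SB)) := h3
      _ ≤ _ := Submodule.finrank_mono h4
  · intro hC
    obtain ⟨B, hcard, hvs, hfs⟩ := lovasz_aux m (Fin n → ℂ) (Fin n → ℂ) v f rfl
      (fun U => by rw [← hset U]; exact hC U)
    have hrange_v : Set.range (fun k : B => v k.1) = v '' ↑B := by
      ext x
      constructor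
      · rintro ⟨k, rfl⟩; exact ⟨k.1, k.2, rfl⟩
      · rintro ⟨k, hk, rfl⟩; exact ⟨⟨k, hk⟩, rfl⟩
    have hrange_f : Set.range (fun k : B => f k.1) = f '' ↑B := by
      ext x
      constructor
      · rintro ⟨k, rfl⟩; exact ⟨k.1, k.2, rfl⟩
      · rintro ⟨k, hk, rfl⟩; exact ⟨⟨k, hk⟩, rfl⟩
    have hliv : LinearIndependent ℂ (fun k : B => v k.1) :=
      linearIndependent_of_top_le_span_of_card_eq_finrank
        (by rw [hrange_v, hvs]) (by rw [Fintype.card_coe, hcard])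
    have hlif : LinearIndependent ℂ (fun k : B => f k.1) :=
      linearIndependent_of_top_le_span_of_card_eq_finrank
        (by rw [hrange_f, hfs])
        (by rw [Fintype.card_coe, hcard, Subspace.dual_finrank_eq])
    exact ⟨B, hliv, hvs, hlif, hfs⟩
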